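/- For every odd natural number N ≥ 1, the quantity β_{N−1} = ½ (2N)^{1/4} ∫_ℝ φ_{N−1}(x) dx satisfies the exact formula β_{N−1} = (πN/2)^{1/4} · √((N−1)!) / (2^{(N−1)/2} · ((N−1)/2)!). Moreover, there is a constant C such that |β_{N−1} − 1| ≤ C/N for all odd N ≥ 1. -/

import Mathlib

open Real Filter MeasureTheory

/-- Physicists' Hermite polynomial `H_n(x) = (-1)^n e^{x²} (d^n/dx^n) e^{-x²}`. -/
noncomputable def physHermite (n : ℕ) (x : ℝ) : ℝ :=
  (-1 : ℝ) ^ n * Real.exp (x ^ 2) * iteratedDeriv n (fun t : ℝ => Real.exp (-t ^ 2)) x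

/-- Normalizing constant `h_n = √π 2^n n!`. -/
noncomputable def hNorm (n : ℕ) : ℝ := Real.sqrt Real.pi * 2 ^ n * (n.factorial : ℝ)

/-- Oscillator wave function `φ_n(x) = h_n^{-1/2} e^{-x²/2} H_n(x)`. -/
noncomputable def osc (n : ℕ) (x : ℝ) : ℝ :=
  hNorm n ^ (-(1 : ℝ) / 2) * Real.exp (-x ^ 2 / 2) * physHermite n x

/-- Airy function `Ai(x) = π⁻¹ lim_{R→∞} ∫₀^R cos(t³/3 + xt) dt`. -/
noncomputable def Ai (x : ℝ) : ℝ :=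
  Real.pi⁻¹ *
    limUnder Filter.atTop (fun R : ℝ => ∫ t in (0 : ℝ)..R, Real.cos (t ^ 3 / 3 + x * t))

/-- Scaling constant `τ_N = 2^{-1/2} N^{-1/6}`. -/
noncomputable def tauN (N : ℕ) : ℝ := (2 : ℝ) ^ (-(1 : ℝ) / 2) * (N : ℝ) ^ (-(1 : ℝ) / 6)

/-- `Δ_N = (√(2N+1) - √(2N-1))/τ_N`. -/
noncomputable def DeltaN (N : ℕ) : ℝ :=
  (Real.sqrt (2 * N + 1) - Real.sqrt (2 * N - 1)) / tauN N

/-- `β_{N-1} = ½ (2N)^{1/4} ∫_ℝ φ_{N-1}`. -/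
noncomputable def betaNm1 (N : ℕ) : ℝ :=
  (1 / 2) * (2 * N : ℝ) ^ ((1 : ℝ) / 4) * ∫ x : ℝ, osc (N - 1) x


section Helpers
open Polynomial Topology Set



noncomputable def Eg (x : ℝ) : ℝ := Real.exp (-(1/4 : ℝ) * x ^ 2)

lemma Eg_pos (x : ℝ) : 0 < Eg x := Real.exp_pos _

lemma hermite_deriv (n : ℕ) : derivative (hermite (n+1)) = (n+1 : ℕ) • hermite n := by
  induction n with
  | zero => simp [hermite_one, hermite_zero]
  | succ n ih =>
    rw [hermite_succ (n+1), derivative_sub, derivative_mul, derivative_X, one_mul, ih]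
    have : X * (n+1 : ℕ) • hermite n - (n+1 : ℕ) • derivative (hermite n)
        = (n+1 : ℕ) • hermite (n+1) := by
      rw [hermite_succ, smul_sub, mul_smul_comm]
    rw [derivative_smul, add_sub_assoc, this, succ_nsmul' (hermite (n+1)) (n+1)]

lemma integrable_pow_gauss (k : ℕ) : Integrable fun x : ℝ => x ^ k * Eg x := by
  have h := integrable_rpow_mul_exp_neg_mul_sq (b := (1/4:ℝ)) (by norm_num) (s := (k:ℝ))
    (by exact lt_of_lt_of_le (by norm_num) (Nat.cast_nonneg k))
  simpa [Eg, Real.rpow_natCast] using h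

lemma integrable_poly_gauss (q : ℝ[X]) : Integrable fun x : ℝ => eval x q * Eg x := by
  induction q using Polynomial.induction_on' with
  | add p q hp hq => simpa [add_mul] using (hp.add hq : Integrable fun x => eval x p * Eg x + eval x q * Eg x)
  | monomial n a =>
    simpa [eval_monomial, mul_assoc] using (integrable_pow_gauss n).const_mul a

lemma tendsto_poly_gauss (q : ℝ[X]) :
    Tendsto (fun x : ℝ => eval x q * Eg x) (cocompact ℝ) (nhds 0) := by
  induction q using Polynomial.induction_on' with
  | add p q hp hq => simpa [add_mul] using hp.add hq
  | monomial n a =>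
    have h := (tendsto_rpow_abs_mul_exp_neg_mul_sq_cocompact (a := (1/4:ℝ)) (by norm_num) (n:ℝ)).const_mul |a|
    rw [mul_zero] at h
    refine squeeze_zero_norm (fun x => ?_) h
    have hx : |x| ^ (n:ℝ) = |x| ^ n := Real.rpow_natCast _ _
    simp only [eval_monomial, Eg, norm_mul, Real.norm_eq_abs, hx]
    rw [abs_exp, abs_pow]
    exact le_of_eq (by ring)

lemma hasDerivAt_poly_gauss (q : ℝ[X]) (x : ℝ) :
    HasDerivAt (fun y => eval y q * Eg y)
      (eval x (derivative q - C (1/2:ℝ) * (X * q)) * Eg x) x := by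
  have h1 : HasDerivAt (fun y : ℝ => eval y q) (eval x (derivative q)) x := q.hasDerivAt x
  have h2 : HasDerivAt (fun y : ℝ => -(1/4:ℝ) * y ^ 2) (-(1/4:ℝ) * (2 * x)) x := by
    simpa using (hasDerivAt_pow 2 x).const_mul (-(1/4:ℝ))
  have h3 : HasDerivAt Eg (Real.exp (-(1/4:ℝ) * x ^ 2) * (-(1/4:ℝ) * (2 * x))) x := h2.exp
  have : HasDerivAt (fun y => eval y q * Eg y) _ x := h1.mul h3
  convert this using 1
  simp [Eg, eval_mul, eval_sub]
  ring

lemma integral_poly_gauss_deriv_zero (q : ℝ[X]) :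
    ∫ x : ℝ, eval x (derivative q - C (1/2:ℝ) * (X * q)) * Eg x = 0 := by
  set f' : ℝ → ℝ := fun x => eval x (derivative q - C (1/2:ℝ) * (X * q)) * Eg x with hf'
  have hint : Integrable f' := integrable_poly_gauss _
  have htop : Tendsto (fun y => eval y q * Eg y) atTop (nhds 0) :=
    (tendsto_poly_gauss q).mono_left (by rw [cocompact_eq_atBot_atTop]; exact le_sup_right)
  have hbot : Tendsto (fun y => eval y q * Eg y) atBot (nhds 0) :=
    (tendsto_poly_gauss q).mono_left (by rw [cocompact_eq_atBot_atTop]; exact le_sup_left)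
  have hIoi : ∫ x in Ioi (0:ℝ), f' x = 0 - eval 0 q * Eg 0 :=
    integral_Ioi_of_hasDerivAt_of_tendsto
      ((hasDerivAt_poly_gauss q 0).continuousAt.continuousWithinAt)
      (fun x _ => hasDerivAt_poly_gauss q x) hint.integrableOn htop
  have hIic : ∫ x in Iic (0:ℝ), f' x = eval 0 q * Eg 0 - 0 :=
    integral_Iic_of_hasDerivAt_of_tendsto
      ((hasDerivAt_poly_gauss q 0).continuousAt.continuousWithinAt)
      (fun x _ => hasDerivAt_poly_gauss q x) hint.integrableOn hbot
  have := integral_add_compl (measurableSet_Iic (a := (0:ℝ))) hint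
  rw [Set.compl_Iic] at this
  rw [← this, hIic, hIoi]
  ring

lemma integral_poly_gauss_ibp (q : ℝ[X]) :
    ∫ x : ℝ, x * eval x q * Eg x = 2 * ∫ x : ℝ, eval x (derivative q) * Eg x := by
  have h0 := integral_poly_gauss_deriv_zero q
  have heq : (fun x : ℝ => eval x (derivative q - C (1/2:ℝ) * (X * q)) * Eg x)
      = fun x => eval x (derivative q) * Eg x - (1/2) * (x * eval x q * Eg x) := by
    funext x; simp [eval_sub, eval_mul]; ring
  rw [heq] at h0
  have h1 : Integrable fun x : ℝ => eval x (derivative q) * Eg x := integrable_poly_gauss _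
  have h2 : Integrable fun x : ℝ => x * eval x q * Eg x := by
    have := integrable_poly_gauss (X * q)
    simpa [eval_mul] using this
  rw [integral_sub h1 (h2.const_mul _)] at h0
  rw [integral_const_mul] at h0
  linarith
noncomputable def Hr (n : ℕ) : ℝ[X] := (hermite n).map (Int.castRingHom ℝ)

lemma Hr_zero : Hr 0 = 1 := by simp [Hr, hermite_zero]

lemma Hr_succ (n : ℕ) : Hr (n+1) = X * Hr n - derivative (Hr n) := by
  simp [Hr, hermite_succ, Polynomial.map_sub, Polynomial.map_mul, derivative_map]

lemma Hr_deriv (n : ℕ) : derivative (Hr (n+1)) = (n+1 : ℕ) • Hr n := by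
  unfold Hr
  rw [derivative_map, hermite_deriv, nsmul_eq_mul, nsmul_eq_mul, Polynomial.map_mul]
  simp

noncomputable def Kk (n : ℕ) : ℝ := ∫ x : ℝ, eval x (Hr n) * Eg x

lemma Kk_zero : Kk 0 = 2 * Real.sqrt π := by
  have : Kk 0 = ∫ x : ℝ, Real.exp (-(1/4:ℝ) * x ^ 2) := by
    simp [Kk, Hr_zero, Eg]
  rw [this, integral_gaussian]
  rw [show π / (1/4:ℝ) = 4 * π by ring, show (4:ℝ) * π = 2^2 * π by norm_num,
    Real.sqrt_mul (by positivity), Real.sqrt_sq (by norm_num)]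

lemma Kk_succ (n : ℕ) : Kk (n+1) = (1/2) * ∫ x : ℝ, x * eval x (Hr n) * Eg x := by
  have h1 : Integrable fun x : ℝ => x * eval x (Hr n) * Eg x := by
    have := integrable_poly_gauss (X * Hr n)
    simp only [eval_mul, eval_X] at this
    exact this
  have h2 : Integrable fun x : ℝ => eval x (derivative (Hr n)) * Eg x := integrable_poly_gauss _
  have : Kk (n+1) = ∫ x : ℝ, (x * eval x (Hr n) * Eg x - eval x (derivative (Hr n)) * Eg x) := by
    rw [Kk]; congr 1; funext x; rw [Hr_succ]; simp [eval_sub, eval_mul]; ring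
  rw [this, integral_sub h1 h2, integral_poly_gauss_ibp (Hr n)]
  ring

lemma Kk_one : Kk 1 = 0 := by
  have h := integral_poly_gauss_ibp (1 : ℝ[X])
  rw [Kk_succ 0, Hr_zero]
  simp only [eval_one, mul_one] at h ⊢
  rw [h]; simp

lemma Kk_rec (n : ℕ) : Kk (n+2) = (n+1 : ℝ) * Kk n := by
  rw [Kk_succ (n+1), integral_poly_gauss_ibp (Hr (n+1)), Hr_deriv n]
  rw [show ∫ x : ℝ, eval x ((n+1:ℕ) • Hr n) * Eg x = (n+1:ℝ) * Kk n by
    rw [Kk, ← integral_const_mul]; congr 1; funext x; simp [eval_smul]; ring]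
  ring

lemma Kk_even (m : ℕ) : Kk (2*m) = 2 * Real.sqrt π * (2*m).factorial / (2^m * m.factorial) := by
  induction m with
  | zero => simpa using Kk_zero
  | succ m ih =>
    have h : 2*(m+1) = (2*m) + 2 := by ring
    rw [h, Kk_rec, ih]
    have h1 : ((2*(m+1)).factorial : ℝ) = (2*m+2) * ((2*m+1) * (2*m).factorial) := by
      rw [show 2*(m+1) = (2*m+1)+1 by ring, Nat.factorial_succ, Nat.factorial_succ]
      push_cast; ring
    rw [show ((2*m)+2) = 2*(m+1) by ring] at *
    rw [h1]
    have h2 : ((m+1).factorial : ℝ) = (m+1) * m.factorial := by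
      rw [Nat.factorial_succ]; push_cast; ring
    rw [h2]
    have hm : (m.factorial : ℝ) ≠ 0 := Nat.cast_ne_zero.2 m.factorial_ne_zero
    have hp : (2:ℝ)^m ≠ 0 := by positivity
    field_simp
    push_cast
    ring

lemma physHermite_eq (n : ℕ) (x : ℝ) :
    physHermite n x = (Real.sqrt 2) ^ n * eval (Real.sqrt 2 * x) (Hr n) := by
  have hfun : (fun t : ℝ => Real.exp (-t ^ 2))
      = fun t => (fun y : ℝ => Real.exp (-(y ^ 2 / 2))) (Real.sqrt 2 * t) := by
    funext t
    simp only [mul_pow, Real.sq_sqrt (by norm_num : (2:ℝ) ≥ 0)]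
    ring_nf
  have hcd : ContDiff ℝ n (fun y : ℝ => Real.exp (-(y ^ 2 / 2))) := by
    have : ContDiff ℝ n (fun y : ℝ => -(y ^ 2 / 2)) := (((contDiff_id (E := ℝ)).pow 2).div_const 2).neg
    exact this.exp
  have h2 : (Real.sqrt 2 * x) ^ 2 = 2 * x ^ 2 := by
    rw [mul_pow, Real.sq_sqrt (by norm_num : (2:ℝ) ≥ 0)]
  rw [physHermite, hfun, iteratedDeriv_comp_const_mul hcd, iteratedDeriv_eq_iterate]
  simp only []
  rw [deriv_gaussian_eq_hermite_mul_gaussian, h2]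
  have haeval : (aeval (Real.sqrt 2 * x)) (hermite n) = eval (Real.sqrt 2 * x) (Hr n) := by
    rw [Hr, aeval_def, Polynomial.eval_map]
    rfl
  rw [haeval]
  rw [show -(2 * x ^ 2 / 2) = -(x^2) by ring, Real.exp_neg]
  have hne : Real.exp (x^2) ≠ 0 := Real.exp_ne_zero _
  have hsq : ((-1:ℝ))^n * (-1)^n = 1 := by rw [← mul_pow]; norm_num
  field_simp
  linear_combination (eval (x * Real.sqrt 2) (Hr n)) * hsq

lemma integral_osc (n : ℕ) :
    ∫ x : ℝ, osc n x
      = hNorm n ^ (-(1 : ℝ) / 2) * ((Real.sqrt 2) ^ n * ((Real.sqrt 2)⁻¹ * Kk n)) := by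
  have hfun : ∀ x : ℝ, osc n x
      = hNorm n ^ (-(1 : ℝ) / 2) * ((Real.sqrt 2) ^ n *
          ((fun u : ℝ => eval u (Hr n) * Eg u) (Real.sqrt 2 * x))) := by
    intro x
    rw [osc, physHermite_eq]
    simp only [Eg]
    rw [mul_pow, Real.sq_sqrt (by norm_num : (2:ℝ) ≥ 0)]
    rw [show -(1/4:ℝ) * (2 * x ^ 2) = -x^2/2 by ring]
    ring
  simp only [hfun]
  rw [integral_const_mul]
  congr 1
  rw [integral_const_mul]
  congr 1
  rw [MeasureTheory.Measure.integral_comp_mul_left (fun u : ℝ => eval u (Hr n) * Eg u) (Real.sqrt 2)]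
  rw [abs_of_nonneg (by positivity)]
  rw [smul_eq_mul, Kk]

lemma pow4_inj {a b : ℝ} (ha : 0 ≤ a) (hb : 0 ≤ b) (h : a ^ (4:ℕ) = b ^ (4:ℕ)) : a = b := by
  have := Real.rpow_natCast a 4
  have h1 : a = (a ^ (4:ℕ)) ^ ((4:ℝ)⁻¹) := by
    rw [← Real.rpow_natCast a 4, ← Real.rpow_mul ha]; norm_num
  have h2 : b = (b ^ (4:ℕ)) ^ ((4:ℝ)⁻¹) := by
    rw [← Real.rpow_natCast b 4, ← Real.rpow_mul hb]; norm_num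
  rw [h1, h2, h]

lemma key_identity {N : ℝ} (hN : 0 ≤ N) :
    (1/2 : ℝ) * (2*N) ^ ((1:ℝ)/4) * Real.sqrt 2 * Real.sqrt (Real.sqrt π)
      = (π * N / 2) ^ ((1:ℝ)/4) := by
  apply pow4_inj (by positivity) (by positivity)
  have e1 : ((2*N) ^ ((1:ℝ)/4)) ^ (4:ℕ) = 2*N := by
    rw [← Real.rpow_natCast ((2*N) ^ ((1:ℝ)/4)) 4, ← Real.rpow_mul (by positivity)]
    norm_num
  have e2 : ((π * N / 2) ^ ((1:ℝ)/4)) ^ (4:ℕ) = π * N / 2 := by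
    rw [← Real.rpow_natCast ((π*N/2) ^ ((1:ℝ)/4)) 4, ← Real.rpow_mul (by positivity)]
    norm_num
  have e3 : (Real.sqrt 2) ^ (4:ℕ) = 4 := by
    rw [show (4:ℕ) = 2*2 by rfl, pow_mul, Real.sq_sqrt (by norm_num : (2:ℝ) ≥ 0)]
    norm_num
  have e4 : (Real.sqrt (Real.sqrt π)) ^ (4:ℕ) = π := by
    rw [show (4:ℕ) = 2*2 by rfl, pow_mul, Real.sq_sqrt (Real.sqrt_nonneg π),
      Real.sq_sqrt (le_of_lt Real.pi_pos)]
  rw [mul_pow, mul_pow, mul_pow, e1, e2, e3, e4]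
  ring

lemma beta_formula (m : ℕ) :
    betaNm1 (2*m+1) = (π * (2*m+1 : ℕ) / 2) ^ ((1:ℝ)/4) *
      Real.sqrt ((2*m).factorial) / (2^m * (m.factorial : ℝ)) := by
  have hsub : (2*m+1) - 1 = 2*m := by omega
  have hA : (0:ℝ) < ((2*m).factorial : ℝ) := by exact_mod_cast (2*m).factorial_pos
  have hF : (0:ℝ) < (m.factorial : ℝ) := by exact_mod_cast m.factorial_pos
  have hsπ : (0:ℝ) < Real.sqrt π := Real.sqrt_pos.2 Real.pi_pos
  have hssπ : (0:ℝ) < Real.sqrt (Real.sqrt π) := Real.sqrt_pos.2 hsπ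
  have hh : (0:ℝ) < hNorm (2*m) := by rw [hNorm]; positivity
  have hrpow : hNorm (2*m) ^ (-(1:ℝ)/2) = (Real.sqrt (hNorm (2*m)))⁻¹ := by
    rw [show (-(1:ℝ)/2) = -(1/2) by norm_num, Real.rpow_neg hh.le, ← Real.sqrt_eq_rpow]
  have hsqrtnorm : Real.sqrt (hNorm (2*m))
      = Real.sqrt (Real.sqrt π) * 2^m * Real.sqrt ((2*m).factorial) := by
    rw [hNorm, Real.sqrt_mul (by positivity), Real.sqrt_mul (Real.sqrt_nonneg π)]
    rw [show (2:ℝ)^(2*m) = ((2:ℝ)^m)^2 by rw [← pow_mul]; ring_nf,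
      Real.sqrt_sq (by positivity)]
  have hs2 : (Real.sqrt 2 : ℝ)^(2*m) = 2^m := by
    rw [pow_mul, Real.sq_sqrt (by norm_num : (0:ℝ) ≤ 2)]
  have h22 : Real.sqrt 2 * Real.sqrt 2 = 2 := Real.mul_self_sqrt (by norm_num)
  have hinv2 : (Real.sqrt 2)⁻¹ = Real.sqrt 2 / 2 := by
    rw [eq_div_iff (by norm_num : (2:ℝ) ≠ 0), inv_mul_eq_div, div_eq_iff
      (by positivity : Real.sqrt 2 ≠ 0), h22]
  rw [betaNm1, hsub, integral_osc, Kk_even, hrpow, hsqrtnorm, hs2, hinv2]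
  rw [← key_identity (by positivity : (0:ℝ) ≤ ((2*m+1:ℕ):ℝ))]
  set SA := Real.sqrt ((2*m).factorial) with hSA
  set Sπ := Real.sqrt (Real.sqrt π) with hSπ
  have hπA : Real.sqrt π = Sπ * Sπ := (Real.mul_self_sqrt hsπ.le).symm
  have hAA : ((2*m).factorial : ℝ) = SA * SA := (Real.mul_self_sqrt hA.le).symm
  have hSA0 : 0 < SA := Real.sqrt_pos.2 hA
  rw [hπA, hAA]
  have hp : (0:ℝ) < (2:ℝ)^m := by positivity
  field_simp

lemma beta_est (m : ℕ) : |betaNm1 (2*m+1) - 1| ≤ 1 / ((2*m+1 : ℕ) : ℝ) := by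
  have hA : (0:ℝ) < ((2*m).factorial : ℝ) := by exact_mod_cast (2*m).factorial_pos
  have hF : (0:ℝ) < (m.factorial : ℝ) := by exact_mod_cast m.factorial_pos
  have hNr : (0:ℝ) < ((2*m+1 : ℕ) : ℝ) := by positivity
  have hβval := beta_formula m
  set β := betaNm1 (2*m+1) with hβ
  have hβ0 : (0:ℝ) ≤ β := by
    rw [hβval]; positivity
  have hc4 : ((π * ((2*m+1:ℕ):ℝ)/2) ^ ((1:ℝ)/4)) ^ (4:ℕ) = π * ((2*m+1:ℕ):ℝ)/2 := by
    rw [← Real.rpow_natCast ((π * ((2*m+1:ℕ):ℝ)/2) ^ ((1:ℝ)/4)) 4,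
      ← Real.rpow_mul (by positivity)]
    norm_num
  have hsA : (Real.sqrt ((2*m).factorial))^(4:ℕ) = ((2*m).factorial:ℝ)^2 := by
    rw [show (4:ℕ) = 2*2 by rfl, pow_mul, Real.sq_sqrt hA.le]
  have hβ4 : β^(4:ℕ) = (π * ((2*m+1:ℕ):ℝ)/2) * ((2*m).factorial:ℝ)^2
      / (((2:ℝ)^m)^4 * ((m.factorial : ℝ))^4) := by
    rw [hβval, div_pow, mul_pow, mul_pow, hc4, hsA]
  have hW := Real.Wallis.W_eq_factorial_ratio m
  have hWpos := Real.Wallis.W_pos m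
  have hcast : ((2*m+1:ℕ):ℝ) = 2*(m:ℝ)+1 := by push_cast; ring
  have hβ4W : β^(4:ℕ) = (π/2) / Real.Wallis.W m := by
    rw [hβ4, hW, hcast]
    have h1 : ((2*m).factorial : ℝ) ≠ 0 := hA.ne'
    have h2 : (m.factorial : ℝ) ≠ 0 := hF.ne'
    have h3 : (2:ℝ)*(m:ℝ)+1 ≠ 0 := by positivity
    field_simp
    rw [show (2:ℝ)^(4*m) = ((2:ℝ)^m)^4 by rw [← pow_mul]; ring_nf]
  have h1 : 1 ≤ β^(4:ℕ) := by
    rw [hβ4W, le_div_iff₀ hWpos, one_mul]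
    exact Real.Wallis.W_le m
  have h2 : β^(4:ℕ) ≤ 1 + 1/((2*m+1:ℕ):ℝ) := by
    rw [hβ4W, div_le_iff₀ hWpos]
    have hle := Real.Wallis.le_W m
    have hkey : (1 + 1/((2*m+1:ℕ):ℝ)) * ((2*(m:ℝ)+1)/(2*(m:ℝ)+2) * (π/2)) = π/2 := by
      rw [hcast]
      have : (2:ℝ)*(m:ℝ)+1 ≠ 0 := by positivity
      have : (2:ℝ)*(m:ℝ)+2 ≠ 0 := by positivity
      field_simp
      ring
    calc π/2 = (1 + 1/((2*m+1:ℕ):ℝ)) * ((2*(m:ℝ)+1)/(2*(m:ℝ)+2) * (π/2)) := hkey.symm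
      _ ≤ (1 + 1/((2*m+1:ℕ):ℝ)) * Real.Wallis.W m := by
          apply mul_le_mul_of_nonneg_left hle (by positivity)
  have hβ1 : 1 ≤ β := by
    by_contra h
    push_neg at h
    have := pow_lt_one₀ hβ0 h (by norm_num : (4:ℕ) ≠ 0)
    linarith
  have hββ4 : β ≤ β^(4:ℕ) := le_self_pow₀ hβ1 (by norm_num)
  rw [abs_of_nonneg (by linarith)]
  linarith


end Helpers

/-- Exact formula for `β_{N-1}` for odd `N`, and the estimate `|β_{N-1} - 1| ≤ C/N`. -/
theorem betaNm1_formula_and_estimate :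
    (∀ N : ℕ, Odd N → 1 ≤ N →
      betaNm1 N = (Real.pi * N / 2) ^ ((1 : ℝ) / 4) *
        Real.sqrt ((N - 1).factorial) /
          (2 ^ ((N - 1) / 2) * (((N - 1) / 2).factorial : ℝ))) ∧
    ∃ C : ℝ, ∀ N : ℕ, Odd N → 1 ≤ N → |betaNm1 N - 1| ≤ C / N := by
  constructor
  · rintro N ⟨m, rfl⟩ _
    have e1 : (2*m+1) - 1 = 2*m := by omega
    have e2 : (2*m) / 2 = m := by omega
    rw [e1, e2]
    exact beta_formula m
  · refine ⟨1, ?_⟩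
    rintro N ⟨m, rfl⟩ _
    simpa using beta_est m
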